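/- Let M₁ = (1/2)(A₁ + B₁) with A₁ = [[cosh x, sinh x],[cosh x, sinh x]] and B₁ = [[1,−1],[−1,1]]. Then for all m ≥ 1, 2·M₁^m = (e^x/2)^{m−1}·A₁ + B₁ + (e^{−x}/(2−e^x))·(1 − (e^x/2)^{m−1})·D₁, where D₁ = [[1,−1],[1,−1]]. -/

import Mathlib

open PowerSeries

/-- closed form for powers of `M₁ = (A₁+B₁)/2`, with entries in
the ring of formal power series over ℝ, where `A₁ = [[cosh, sinh],[cosh, sinh]]`,
`B₁ = [[1,−1],[−1,1]]`, `D₁ = [[1,−1],[1,−1]]`. -/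
theorem cusick_stmt12 (m : ℕ) (hm : 1 ≤ m) :
    let coshS : PowerSeries ℝ :=
      PowerSeries.C (1 / 2 : ℝ) * (PowerSeries.exp ℝ + PowerSeries.rescale (-1 : ℝ) (PowerSeries.exp ℝ))
    let sinhS : PowerSeries ℝ :=
      PowerSeries.C (1 / 2 : ℝ) * (PowerSeries.exp ℝ - PowerSeries.rescale (-1 : ℝ) (PowerSeries.exp ℝ))
    let A₁ : Matrix (Fin 2) (Fin 2) (PowerSeries ℝ) :=
      !![coshS, sinhS; coshS, sinhS]
    let B₁ : Matrix (Fin 2) (Fin 2) (PowerSeries ℝ) := !![1, -1; -1, 1]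
    let D₁ : Matrix (Fin 2) (Fin 2) (PowerSeries ℝ) := !![1, -1; 1, -1]
    let M₁ : Matrix (Fin 2) (Fin 2) (PowerSeries ℝ) :=
      (PowerSeries.C (1 / 2 : ℝ)) • (A₁ + B₁)
    (2 : PowerSeries ℝ) • M₁ ^ m
      = ((PowerSeries.C (1 / 2 : ℝ) * PowerSeries.exp ℝ) ^ (m - 1)) • A₁ + B₁
        + ((PowerSeries.rescale (-1 : ℝ) (PowerSeries.exp ℝ))
            * (2 - PowerSeries.exp ℝ)⁻¹
            * (1 - (PowerSeries.C (1 / 2 : ℝ) * PowerSeries.exp ℝ) ^ (m - 1))) • D₁ := by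
  intro coshS sinhS A₁ B₁ D₁ M₁
  set c : PowerSeries ℝ := PowerSeries.C (1 / 2 : ℝ) with hc
  set E : PowerSeries ℝ := PowerSeries.exp ℝ with hE
  set F : PowerSeries ℝ := PowerSeries.rescale (-1 : ℝ) (PowerSeries.exp ℝ) with hF
  set g : PowerSeries ℝ := (2 - PowerSeries.exp ℝ)⁻¹ with hg
  have hC : c * 2 = 1 := by
    rw [hc, show (2 : PowerSeries ℝ) = PowerSeries.C (2 : ℝ) from (map_ofNat _ 2).symm, ← map_mul]
    norm_num
  have hinv : (2 - E) * g = 1 := by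
    rw [hE, hg]
    refine PowerSeries.mul_inv_cancel _ ?_
    rw [map_sub, PowerSeries.constantCoeff_exp, map_ofNat]
    norm_num
  have hcosh : coshS = c * (E + F) := rfl
  have hsinh : sinhS = c * (E - F) := rfl
  have hA : A₁ = !![coshS, sinhS; coshS, sinhS] := rfl
  have hB : B₁ = !![1, -1; -1, 1] := rfl
  have hD : D₁ = !![1, -1; 1, -1] := rfl
  induction m, hm using Nat.le_induction with
  | base =>
      have h1 : M₁ ^ 1 = c • (A₁ + B₁) := by rw [pow_one]
      rw [h1]
      refine Matrix.ext fun i j => ?_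
      fin_cases i <;> fin_cases j <;>
        simp only [hA, hB, hD, Matrix.smul_apply, Matrix.add_apply, Matrix.mul_apply,
          Fin.sum_univ_two, Fin.isValue, Matrix.cons_val', Matrix.cons_val_zero,
          Matrix.cons_val_one, Matrix.head_cons, Matrix.head_fin_const, Matrix.empty_val',
          Fin.mk_zero, Fin.mk_one, Matrix.of_apply, Matrix.cons_val_fin_one, Nat.sub_self, pow_zero, smul_eq_mul, hcosh, hsinh] <;>
        [ (linear_combination (c * (E + F) + 1) * hC);
          (linear_combination (c * (E - F) - 1) * hC);
          (linear_combination (c * (E + F) - 1) * hC);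
          (linear_combination (c * (E - F) + 1) * hC) ]
  | succ m hm1 ih =>
      have hpow : (c * E) ^ m = (c * E) ^ (m - 1) * (c * E) := by
        conv_lhs => rw [show m = m - 1 + 1 from (Nat.sub_add_cancel hm1).symm, pow_succ]
      have key : (2 : PowerSeries ℝ) • M₁ ^ (m + 1)
          = c • (((2 : PowerSeries ℝ) • M₁ ^ m) * (A₁ + B₁)) := by
        have hM : M₁ = c • (A₁ + B₁) := rfl
        rw [pow_succ, hM, Matrix.mul_smul, Matrix.smul_mul, smul_comm]
      rw [key, ih, Nat.add_sub_cancel]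
      refine Matrix.ext fun i j => ?_
      fin_cases i <;> fin_cases j <;>
        simp only [hA, hB, hD, Matrix.smul_apply, Matrix.add_apply, Matrix.mul_apply,
          Fin.sum_univ_two, Fin.isValue, Matrix.cons_val', Matrix.cons_val_zero,
          Matrix.cons_val_one, Matrix.head_cons, Matrix.head_fin_const, Matrix.empty_val',
          Fin.mk_zero, Fin.mk_one, Matrix.of_apply, Matrix.cons_val_fin_one, smul_eq_mul, hcosh, hsinh, hpow, mul_neg, mul_one, neg_neg] <;>
        [ (linear_combination ((c * E) ^ (m-1) * c * E * (c * (E + F)) + 1 + F * g + F * c * (c*E)^(m-1)) * hC - (F * c * (c*E)^(m-1)) * hinv);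
          (linear_combination ((c * E) ^ (m-1) * c * E * (c * (E - F)) - 1 - F * g - F * c * (c*E)^(m-1)) * hC + (F * c * (c*E)^(m-1)) * hinv);
          (linear_combination ((c * E) ^ (m-1) * c * E * (c * (E + F)) - 1 + F * g + F * c * (c*E)^(m-1)) * hC - (F * c * (c*E)^(m-1)) * hinv);
          (linear_combination ((c * E) ^ (m-1) * c * E * (c * (E - F)) + 1 - F * g - F * c * (c*E)^(m-1)) * hC + (F * c * (c*E)^(m-1)) * hinv) ]
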